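/- Fix an integer j ≥ 1 and T* > 0. There is a constant c > 0, depending only on T* and j, with the following property: for every t ∈ [0, T*) and every function φ : ℝ → ℝ that is j times continuously differentiable on [0, T*], there exists ψ : ℝ → ℝ such that (i) ψ(x) = φ(x + t) for all x ∈ [0, T* − t]; (ii) ψ is (j−1) times continuously differentiable on [0, T*] and is j times continuously differentiable on each of the subintervals [0, T* − t] and [T* − t, T*]; and (iii) ∑_{i=0}^{j} ( ∫_0^{T*−t} (ψ^{(i)}(x))² dx + ∫_{T*−t}^{T*} (ψ^{(i)}(x))² dx ) ≤ c · ‖φ‖_{W^j}², where on each subinterval ψ^{(i)} denotes the i-th derivative of ψ there. -/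

import Mathlib

open Set MeasureTheory intervalIntegral

noncomputable def Hrec (g : ℝ → ℝ) (c : ℕ → ℝ) : ℕ → ℝ → ℝ
  | 0 => g
  | (k+1) => fun x => c (k+1) + ∫ s in (0:ℝ)..x, Hrec g c k s

lemma Hrec_cont {g : ℝ → ℝ} (hg : Continuous g) (c : ℕ → ℝ) :
    ∀ k, Continuous (Hrec g c k) := by
  intro k
  induction k with
  | zero => exact hg
  | succ k ih =>
    show Continuous fun x => c (k+1) + ∫ s in (0:ℝ)..x, Hrec g c k s
    refine continuous_const.add ?_
    refine continuous_iff_continuousAt.2 fun x => ?_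
    exact ((ih.integral_hasStrictDerivAt 0 x).hasDerivAt).continuousAt

lemma Hrec_deriv {g : ℝ → ℝ} (hg : Continuous g) (c : ℕ → ℝ) (k : ℕ) (x : ℝ) :
    HasDerivAt (Hrec g c (k+1)) (Hrec g c k x) x := by
  have := ((Hrec_cont hg c k).integral_hasStrictDerivAt 0 x).hasDerivAt
  exact this.const_add (c (k+1))

/-- master identification lemma -/
lemma chain_iteratedDerivWithin {n : ℕ} {s : Set ℝ} (hs : UniqueDiffOn ℝ s)
    {f : ℝ → ℝ} {F : ℕ → ℝ → ℝ} (h0 : Set.EqOn f (F 0) s)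
    (hF : ∀ m, m < n → ∀ x ∈ s, HasDerivWithinAt (F m) (F (m+1) x) s x) :
    ∀ m, m ≤ n → ∀ x ∈ s, iteratedDerivWithin m f s x = F m x := by
  intro m
  induction m with
  | zero => intro _ x hx; simpa using h0 hx
  | succ m ih =>
    intro hm x hx
    rw [iteratedDerivWithin_succ]
    have heq : Set.EqOn (iteratedDerivWithin m f s) (F m) s := fun y hy =>
      ih (le_of_lt (Nat.lt_of_succ_le hm)) y hy
    rw [derivWithin_congr heq (heq hx)]
    exact ((hF m (Nat.lt_of_succ_le hm) x hx).derivWithin (hs x hx))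

lemma chain_contDiffOn {n : ℕ} {s : Set ℝ} (hs : UniqueDiffOn ℝ s)
    {f : ℝ → ℝ} {F : ℕ → ℝ → ℝ} (h0 : Set.EqOn f (F 0) s)
    (hF : ∀ m, m < n → ∀ x ∈ s, HasDerivWithinAt (F m) (F (m+1) x) s x)
    (hcont : ContinuousOn (F n) s) :
    ContDiffOn ℝ n f s := by
  have hid := chain_iteratedDerivWithin hs h0 hF
  have hFc : ∀ m, m ≤ n → ContinuousOn (F m) s := by
    intro m hm
    rcases eq_or_lt_of_le hm with rfl | hlt
    · exact hcont
    · intro x hx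
      exact ((hF m hlt x hx).differentiableWithinAt).continuousWithinAt
  have : ContDiffOn ℝ (n : ℕ∞) f s := by
    apply contDiffOn_of_continuousOn_differentiableOn_deriv
    · intro m hm
      have hm' : m ≤ n := by exact_mod_cast hm
      exact (hFc m hm').congr (hid m hm')
    · intro m hm
      have hm' : m < n := by exact_mod_cast hm
      have : DifferentiableOn ℝ (F m) s := fun x hx =>
        (hF m hm' x hx).differentiableWithinAt
      exact this.congr (hid m (le_of_lt hm'))
  exact_mod_cast this
open Set MeasureTheory intervalIntegral

lemma cont_ii' {u : ℝ → ℝ} {A B : ℝ} (hAB : A ≤ B) (h : ContinuousOn u (Icc A B)) :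
    IntervalIntegrable u MeasureTheory.volume A B := by
  apply ContinuousOn.intervalIntegrable
  rwa [uIcc_of_le hAB]

lemma agmon {L : ℝ} (hL : 0 < L) {f f' : ℝ → ℝ}
    (hf : ContinuousOn f (Icc 0 L)) (hf' : ContinuousOn f' (Icc 0 L))
    (hd : ∀ x ∈ Ioo (0:ℝ) L, HasDerivAt f (f' x) x) :
    ∀ y ∈ Icc (0:ℝ) L, (f y)^2 ≤ (1/L) * (∫ x in (0:ℝ)..L, (f x)^2)
      + ((∫ x in (0:ℝ)..L, (f x)^2) + (∫ x in (0:ℝ)..L, (f' x)^2)) := by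
  intro y hy
  set I : ℝ := ∫ x in (0:ℝ)..L, (f x)^2 with hI
  set R : ℝ := I + (∫ x in (0:ℝ)..L, (f' x)^2) with hR
  have hint2 : ContinuousOn (fun x => (f x)^2 + (f' x)^2) (Icc 0 L) :=
    (hf.pow 2).add (hf'.pow 2)
  -- step 1
  have step1 : ∀ x ∈ Icc (0:ℝ) L, (f y)^2 ≤ (f x)^2 + R := by
    intro x hx
    have hsub : uIcc x y ⊆ Icc 0 L := uIcc_subset_Icc hx hy
    have hmm : Icc (min x y) (max x y) ⊆ Icc 0 L := by
      exact hsub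
    have hFTC : (∫ s in x..y, 2 * f s * f' s) = (f y)^2 - (f x)^2 := by
      have hii : IntervalIntegrable (fun s => 2 * f s * f' s) MeasureTheory.volume x y := by
        apply ContinuousOn.intervalIntegrable
        exact (continuousOn_const.mul (hf.mono hsub)).mul (hf'.mono hsub)
      refine integral_eq_sub_of_hasDeriv_right (f := fun s => (f s)^2) ((hf.mono hsub).pow 2) ?_ hii
      intro s hs
      have hs' : s ∈ Ioo (0:ℝ) L :=
        ⟨lt_of_le_of_lt (le_min hx.1 hy.1) hs.1, lt_of_lt_of_le hs.2 (max_le hx.2 hy.2)⟩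
      have h := ((hd s hs').pow 2).hasDerivWithinAt (s := Ioi s)
      simpa [pow_one, mul_comm, mul_assoc, Pi.pow_def] using h
    have habs : (f y)^2 - (f x)^2 ≤ R := by
      rw [← hFTC]
      have h1 : (∫ s in x..y, 2 * f s * f' s) ≤ |∫ s in x..y, 2 * f s * f' s| := le_abs_self _
      have h2 : |∫ s in x..y, 2 * f s * f' s| ≤ ∫ s in min x y..max x y, |2 * f s * f' s| := by
        rcases le_total x y with h | h
        · rw [min_eq_left h, max_eq_right h]
          exact intervalIntegral.abs_integral_le_integral_abs h
        · rw [min_eq_right h, max_eq_left h, intervalIntegral.integral_symm, abs_neg]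
          exact intervalIntegral.abs_integral_le_integral_abs h
      have h3 : (∫ s in min x y..max x y, |2 * f s * f' s|) ≤
          ∫ s in min x y..max x y, ((f s)^2 + (f' s)^2) := by
        apply intervalIntegral.integral_mono_on min_le_max
        · exact cont_ii' min_le_max ((((continuousOn_const.mul (hf.mono hmm)).mul (hf'.mono hmm))).abs)
        · exact cont_ii' min_le_max (hint2.mono hmm)
        · intro s _
          calc |2 * f s * f' s| = 2 * |f s| * |f' s| := by
                rw [abs_mul, abs_mul]; simp
            _ ≤ |f s|^2 + |f' s|^2 := two_mul_le_add_sq _ _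
            _ = (f s)^2 + (f' s)^2 := by rw [sq_abs, sq_abs]
      have h4 : (∫ s in min x y..max x y, ((f s)^2 + (f' s)^2)) ≤
          ∫ s in (0:ℝ)..L, ((f s)^2 + (f' s)^2) := by
        apply intervalIntegral.integral_mono_interval (hmm ⟨le_refl _, min_le_max⟩).1
          min_le_max (hmm ⟨min_le_max, le_refl _⟩).2
        · filter_upwards with s using by positivity
        · exact cont_ii' hL.le hint2
      have h5 : (∫ s in (0:ℝ)..L, ((f s)^2 + (f' s)^2)) = R := by
        rw [intervalIntegral.integral_add (f := fun x => (f x)^2) (g := fun x => (f' x)^2) (cont_ii' hL.le (hf.pow 2)) (cont_ii' hL.le (hf'.pow 2))]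
      linarith
    linarith
  -- step 2: integrate over x
  have hmono : (∫ x in (0:ℝ)..L, (f y)^2) ≤ ∫ x in (0:ℝ)..L, ((f x)^2 + R) := by
    apply intervalIntegral.integral_mono_on hL.le intervalIntegrable_const
      (cont_ii' hL.le ((hf.pow 2).add continuousOn_const)) step1
  have hadd : (∫ x in (0:ℝ)..L, ((f x)^2 + R)) = I + L * R := by
    rw [intervalIntegral.integral_add (f := fun x => (f x)^2) (cont_ii' hL.le (hf.pow 2)) intervalIntegrable_const,
      intervalIntegral.integral_const, ← hI]
    simp [smul_eq_mul]
  rw [intervalIntegral.integral_const, hadd] at hmono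
  have hmono' : L * (f y)^2 ≤ I + L * R := by
    have : (L - 0) • (f y)^2 = L * (f y)^2 := by simp [smul_eq_mul]
    linarith [hmono.trans_eq' this]
  have h2 : L * (f y) ^ 2 ≤ L * ((1/L) * I + R) := by
    rw [mul_add, ← mul_assoc, mul_one_div, div_self hL.ne', one_mul]
    linarith
  exact le_of_mul_le_mul_left h2 hL

set_option maxHeartbeats 1000000 in
theorem stmt2 (j : ℕ) (hj : 1 ≤ j) (Tstar : ℝ) (hT : 0 < Tstar) :
    ∃ c > (0:ℝ), ∀ t ∈ Set.Ico (0:ℝ) Tstar, ∀ φ : ℝ → ℝ,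
      ContDiffOn ℝ j φ (Set.Icc 0 Tstar) →
      ∃ ψ : ℝ → ℝ,
        (∀ x ∈ Set.Icc (0:ℝ) (Tstar - t), ψ x = φ (x + t)) ∧
        ContDiffOn ℝ (j - 1 : ℕ) ψ (Set.Icc 0 Tstar) ∧
        ContDiffOn ℝ j ψ (Set.Icc 0 (Tstar - t)) ∧
        ContDiffOn ℝ j ψ (Set.Icc (Tstar - t) Tstar) ∧
        ∑ i ∈ Finset.range (j + 1),
            ((∫ x in (0:ℝ)..(Tstar - t),
                (iteratedDerivWithin i ψ (Set.Icc 0 (Tstar - t)) x) ^ 2)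
              + ∫ x in (Tstar - t)..Tstar,
                  (iteratedDerivWithin i ψ (Set.Icc (Tstar - t) Tstar) x) ^ 2)
          ≤ c * ∑ i ∈ Finset.range (j + 1),
                ∫ x in (0:ℝ)..Tstar,
                  (iteratedDerivWithin i φ (Set.Icc 0 Tstar) x) ^ 2 := by
  classical
  set CT : ℝ := 2 + Tstar * (Tstar+1)^(2*j) * (1/Tstar + 2) with hCT
  have hCT1 : (1:ℝ) ≤ CT := by
    have : 0 ≤ Tstar * (Tstar+1)^(2*j) * (1/Tstar + 2) := by positivity
    rw [hCT]; linarith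
  have hCTpos : (0:ℝ) < CT := lt_of_lt_of_le one_pos hCT1
  have hjpos : (0:ℝ) < (j+1 : ℕ) := by positivity
  refine ⟨((j:ℝ)+1) * CT, by positivity, ?_⟩
  intro t ht φ hφ
  obtain ⟨ht0, htT⟩ := ht
  set a : ℝ := Tstar - t with ha
  have ha0 : 0 < a := by simp only [ha]; linarith
  have haT : a ≤ Tstar := by simp only [ha]; linarith
  set s0 : Set ℝ := Set.Icc 0 Tstar with hs0
  have uD : UniqueDiffOn ℝ s0 := uniqueDiffOn_Icc hT
  set P : ℕ → ℝ → ℝ := fun i => iteratedDerivWithin i φ s0 with hP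
  have hPcont : ∀ i, i ≤ j → ContinuousOn (P i) s0 := fun i hij =>
    hφ.continuousOn_iteratedDerivWithin (by exact_mod_cast hij) uD
  have HD : ∀ i, i < j → ∀ y ∈ s0, HasDerivWithinAt (P i) (P (i+1) y) s0 y := by
    intro i hij y hy
    have hdiff := hφ.differentiableOn_iteratedDerivWithin (m := i) (by exact_mod_cast hij) uD
    have h := (hdiff y hy).hasDerivWithinAt
    have : P (i+1) y = derivWithin (P i) s0 y := by
      simp only [hP]; exact congrFun iteratedDerivWithin_succ y
    rwa [this]
  have HDat : ∀ i, i < j → ∀ y ∈ Set.Ioo (0:ℝ) Tstar, HasDerivAt (P i) (P (i+1) y) y := by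
    intro i hij y hy
    exact (HD i hij y (Set.Ioo_subset_Icc_self hy)).hasDerivAt
      (Icc_mem_nhds hy.1 hy.2)
  set S : ℝ := ∑ i ∈ Finset.range (j + 1), ∫ x in (0:ℝ)..Tstar, (P i x)^2 with hS
  have hterm_nonneg : ∀ i ∈ Finset.range (j+1), 0 ≤ ∫ x in (0:ℝ)..Tstar, (P i x)^2 :=
    fun i _ => intervalIntegral.integral_nonneg hT.le (fun u _ => sq_nonneg _)
  have hS0 : 0 ≤ S := Finset.sum_nonneg hterm_nonneg
  have hSterm : ∀ i, i ≤ j → (∫ x in (0:ℝ)..Tstar, (P i x)^2) ≤ S := by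
    intro i hij
    exact Finset.single_le_sum hterm_nonneg (Finset.mem_range.2 (Nat.lt_succ_of_le hij))
  set D : ℝ := (1/Tstar + 2) * S with hD
  have hD0 : 0 ≤ D := by positivity
  set B : ℝ := Real.sqrt D with hB
  have hB0 : 0 ≤ B := Real.sqrt_nonneg _
  have hAg : ∀ i, i ≤ j - 1 → ∀ y ∈ s0, (P i y)^2 ≤ D := by
    intro i hi y hy
    have hij : i < j := by omega
    have h := agmon hT (hPcont i hij.le) (hPcont (i+1) hij) (HDat i hij) y hy
    have h1 := hSterm i hij.le
    have h2 := hSterm (i+1) hij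
    have hTinv : 0 ≤ 1/Tstar := by positivity
    calc (P i y)^2 ≤ (1/Tstar) * (∫ x in (0:ℝ)..Tstar, (P i x)^2)
          + ((∫ x in (0:ℝ)..Tstar, (P i x)^2) + (∫ x in (0:ℝ)..Tstar, (P (i+1) x)^2)) := h
      _ ≤ (1/Tstar) * S + (S + S) := by
          have := mul_le_mul_of_nonneg_left h1 hTinv
          linarith
      _ = D := by rw [hD]; ring
  have hAg' : ∀ i, i ≤ j - 1 → ∀ y ∈ s0, |P i y| ≤ B := by
    intro i hi y hy
    rw [hB, ← Real.sqrt_sq_eq_abs]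
    exact Real.sqrt_le_sqrt (hAg i hi y hy)
  -- the reflected top derivative
  set w : ℝ → ℝ := P (j-1) with hw
  set g : ℝ → ℝ := fun x => w (Tstar - |max 0 (min x Tstar) - a|) with hg
  have hproj : ∀ x : ℝ, Tstar - |max 0 (min x Tstar) - a| ∈ s0 := by
    intro x
    have h1 : (0:ℝ) ≤ max 0 (min x Tstar) := le_max_left _ _
    have h2 : max 0 (min x Tstar) ≤ Tstar := max_le hT.le (min_le_right _ _)
    have h3 : |max 0 (min x Tstar) - a| ≤ Tstar := by
      rw [abs_le]; constructor <;> [linarith; linarith [ha0.le, haT]]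
    have h4 : (0:ℝ) ≤ |max 0 (min x Tstar) - a| := abs_nonneg _
    exact ⟨by linarith, by linarith⟩
  have hgc : Continuous g := by
    apply (hPcont (j-1) (Nat.sub_le j 1)).comp_continuous
    · exact continuous_const.sub
        (((continuous_const.max (continuous_id.min continuous_const)).sub continuous_const).abs)
    · exact hproj
  have hgl : ∀ x ∈ Set.Icc (0:ℝ) a, g x = w (x + t) := by
    intro x hx
    have h1 : min x Tstar = x := min_eq_left (hx.2.trans haT)
    have h2 : max 0 x = x := max_eq_right hx.1
    have h3 : |x - a| = a - x := by
      rw [abs_of_nonpos (by linarith [hx.2])]; ring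
    simp only [hg, h1, h2, h3]
    congr 1
    rw [ha]; ring
  have hgr : ∀ x ∈ Set.Icc a Tstar, g x = w (2*Tstar - t - x) := by
    intro x hx
    have h1 : min x Tstar = x := min_eq_left hx.2
    have h2 : max 0 x = x := max_eq_right (ha0.le.trans hx.1)
    have h3 : |x - a| = x - a := abs_of_nonneg (by linarith [hx.1])
    simp only [hg, h1, h2, h3]
    congr 1
    rw [ha]; ring
  set cst : ℕ → ℝ := fun k => P (j-1-k) t with hcst
  have htmem : t ∈ s0 := ⟨ht0, htT.le⟩
  set H : ℕ → ℝ → ℝ := Hrec g cst with hH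
  have hHcont : ∀ k, Continuous (H k) := Hrec_cont hgc cst
  have hHd : ∀ k x, HasDerivAt (H (k+1)) (H k x) x := fun k x => Hrec_deriv hgc cst k x
  -- left identity for H
  have F4 : ∀ k, k ≤ j - 1 → ∀ x ∈ Set.Icc (0:ℝ) a, H k x = P (j-1-k) (x+t) := by
    intro k
    induction k with
    | zero =>
      intro _ x hx
      show g x = P (j-1-0) (x+t)
      rw [hgl x hx, Nat.sub_zero]
    | succ k ih =>
      intro hk1 x hx
      have hk : k ≤ j - 1 := Nat.le_of_succ_le hk1
      obtain ⟨i, hi⟩ : ∃ i, j - 1 - k = i + 1 := ⟨j - 1 - (k+1), by omega⟩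
      have hi2 : j - 1 - (k+1) = i := by omega
      have hij : i < j := by omega
      have hxa : x + t ≤ Tstar := by rw [ha] at hx; linarith [hx.2]
      have hcongr : Set.EqOn (H k) (fun s => P (i+1) (s+t)) (Set.uIcc 0 x) := by
        intro s hs
        rw [Set.uIcc_of_le hx.1] at hs
        have hs' : s ∈ Set.Icc (0:ℝ) a := ⟨hs.1, hs.2.trans hx.2⟩
        rw [ih hk s hs', hi]
      have hmaps : ∀ s ∈ Set.Icc (0:ℝ) x, s + t ∈ s0 := by
        intro s hs
        exact ⟨by linarith [hs.1, ht0], by linarith [hs.2, hxa]⟩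
      have hcont : ContinuousOn (fun s => P i (s+t)) (Set.Icc 0 x) := by
        apply (hPcont i hij.le).comp ((continuous_add_right t).continuousOn) hmaps
      have hcont' : ContinuousOn (fun s => P (i+1) (s+t)) (Set.Icc 0 x) := by
        apply (hPcont (i+1) hij).comp ((continuous_add_right t).continuousOn) hmaps
      have hFTC : (∫ s in (0:ℝ)..x, P (i+1) (s+t)) = P i (x+t) - P i (0+t) := by
        apply intervalIntegral.integral_eq_sub_of_hasDerivAt_of_le hx.1 hcont
        · intro s hs
          have hst : s + t ∈ Set.Ioo (0:ℝ) Tstar :=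
            ⟨by linarith [hs.1, ht0], by linarith [hs.2, hxa]⟩
          have h := (HDat i hij (s+t) hst).comp s ((hasDerivAt_id s).add_const t)
          simpa [Function.comp_def] using h
        · exact cont_ii' hx.1 hcont'
      show cst (k+1) + (∫ s in (0:ℝ)..x, H k s) = P (j-1-(k+1)) (x+t)
      rw [intervalIntegral.integral_congr hcongr, hFTC, hi2]
      have : cst (k+1) = P i t := by simp only [hcst]; rw [hi2]
      rw [this, zero_add]
      ring
  -- uniform bound for H
  have hHb : ∀ k, ∀ x ∈ s0, |H k x| ≤ (Tstar+1)^k * B := by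
    intro k
    induction k with
    | zero =>
      intro x hx
      show |g x| ≤ (Tstar+1)^0 * B
      rw [pow_zero, one_mul, hg]
      exact hAg' (j-1) le_rfl _ (hproj x)
    | succ k ih =>
      intro x hx
      have hbnd : ∀ s ∈ Set.uIoc (0:ℝ) x, ‖H k s‖ ≤ (Tstar+1)^k * B := by
        intro s hs
        rw [Set.uIoc_of_le hx.1] at hs
        exact ih s ⟨hs.1.le, hs.2.trans hx.2⟩
      have hint := intervalIntegral.norm_integral_le_of_norm_le_const hbnd
      have hxx : |x - 0| ≤ Tstar := by
        rw [sub_zero, abs_of_nonneg hx.1]; exact hx.2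
      have h2 : |∫ s in (0:ℝ)..x, H k s| ≤ ((Tstar+1)^k * B) * Tstar := by
        calc |∫ s in (0:ℝ)..x, H k s| ≤ ((Tstar+1)^k * B) * |x - 0| := hint
          _ ≤ ((Tstar+1)^k * B) * Tstar := by
              apply mul_le_mul_of_nonneg_left hxx (by positivity)
      have h1 : |cst (k+1)| ≤ B := hAg' (j-1-(k+1)) (Nat.sub_le _ _) t htmem
      show |cst (k+1) + ∫ s in (0:ℝ)..x, H k s| ≤ (Tstar+1)^(k+1) * B
      have hpk : (1:ℝ) ≤ (Tstar+1)^k := one_le_pow₀ (by linarith)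
      calc |cst (k+1) + ∫ s in (0:ℝ)..x, H k s|
          ≤ |cst (k+1)| + |∫ s in (0:ℝ)..x, H k s| := abs_add_le _ _
        _ ≤ B + ((Tstar+1)^k * B) * Tstar := by linarith
        _ ≤ (Tstar+1)^(k+1) * B := by
            rw [pow_succ]
            nlinarith [hB0, hpk, hT]
  set ψ : ℝ → ℝ := H (j-1) with hψ
  refine ⟨ψ, ?_, ?_, ?_, ?_, ?_⟩
  · -- (i)
    intro x hx
    have := F4 (j-1) le_rfl x hx
    rw [hψ, this, Nat.sub_self]
    simp [hP]
  · -- (ii) global C^{j-1}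
    apply chain_contDiffOn (n := j-1) (F := fun m => H (j-1-m)) uD
    · intro x _
      rw [Nat.sub_zero]
    · intro m hm x hx
      obtain ⟨k, hk⟩ : ∃ k, j - 1 - m = k + 1 := ⟨j - 1 - m - 1, by omega⟩
      have hk2 : j - 1 - (m+1) = k := by omega
      rw [hk, hk2]
      exact (hHd k x).hasDerivWithinAt
    · rw [Nat.sub_self]
      exact hgc.continuousOn
  · -- (iii) left piece C^j
    have uDa : UniqueDiffOn ℝ (Set.Icc (0:ℝ) a) := uniqueDiffOn_Icc ha0
    apply chain_contDiffOn (n := j) (F := fun m x => P m (x+t)) uDa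
    · intro x hx
      have := F4 (j-1) le_rfl x hx
      rw [hψ, this, Nat.sub_self]
    · intro m hm x hx
      have hmem : x + t ∈ s0 := ⟨by linarith [hx.1, ht0], by rw [ha] at hx; linarith [hx.2]⟩
      have hmt : Set.MapsTo (fun s => s + t) (Set.Icc (0:ℝ) a) s0 := by
        intro s hs
        obtain ⟨hs1, hs2⟩ := hs
        refine ⟨?_, ?_⟩
        · show (0:ℝ) ≤ s + t
          linarith
        · show s + t ≤ Tstar
          linarith
      have htr : HasDerivWithinAt (fun s => s + t) 1 (Set.Icc (0:ℝ) a) x :=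
        ((hasDerivAt_id x).add_const t).hasDerivWithinAt
      have h := (HD m hm (x+t) hmem).comp x htr hmt
      simpa [Function.comp_def] using h
    · have hmt : Set.MapsTo (fun s => s + t) (Set.Icc (0:ℝ) a) s0 := by
        intro s hs
        obtain ⟨hs1, hs2⟩ := hs
        refine ⟨?_, ?_⟩
        · show (0:ℝ) ≤ s + t
          linarith
        · show s + t ≤ Tstar
          linarith
      exact (hPcont j le_rfl).comp ((continuous_add_right t).continuousOn) hmt
  · -- (iv) right piece C^j
    rcases eq_or_lt_of_le ht0 with ht0' | ht0'
    · rw [ha, ← ht0', sub_zero, Set.Icc_self]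
      intro x hx
      rw [Set.mem_singleton_iff] at hx
      subst hx
      exact contDiffWithinAt_singleton
    · have haT' : a < Tstar := by rw [ha]; linarith
      have uDr : UniqueDiffOn ℝ (Set.Icc a Tstar) := uniqueDiffOn_Icc haT'
      have hrmaps : ∀ s ∈ Set.Icc a Tstar, 2*Tstar - t - s ∈ Set.Icc a Tstar := by
        intro s hs
        rw [ha] at hs ⊢
        exact ⟨by linarith [hs.2], by linarith [hs.1, ht0]⟩
      apply chain_contDiffOn (n := j)
        (F := fun m => if m < j then H (j-1-m) else fun x => P j (2*Tstar - t - x) * (-1)) uDr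
      · intro x _
        rw [if_pos (by omega), Nat.sub_zero]
      · intro m hm x hx
        rcases lt_or_ge (m+1) j with hm1 | hm1
        · rw [if_pos hm, if_pos hm1]
          obtain ⟨k, hk⟩ : ∃ k, j - 1 - m = k + 1 := ⟨j - 1 - m - 1, by omega⟩
          have hk2 : j - 1 - (m+1) = k := by omega
          rw [hk, hk2]
          exact (hHd k x).hasDerivWithinAt
        · have hmj : m = j - 1 := by omega
          rw [if_pos hm, if_neg (by omega), hmj, Nat.sub_self]
          have hmem : 2*Tstar - t - x ∈ s0 := Set.Icc_subset_Icc (by linarith) le_rfl (hrmaps x hx)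
          have hmt : Set.MapsTo (fun s => 2*Tstar - t - s) (Set.Icc a Tstar) s0 := by
            intro s hs
            exact Set.Icc_subset_Icc (by linarith) le_rfl (hrmaps s hs)
          have htr : HasDerivWithinAt (fun s => 2*Tstar - t - s) (-1) (Set.Icc a Tstar) x :=
            (((hasDerivAt_id x).const_sub (2*Tstar - t))).hasDerivWithinAt
          have h := (HD (j-1) (by omega) (2*Tstar - t - x) hmem).comp x htr hmt
          have hjj : j - 1 + 1 = j := by omega
          rw [hjj] at h
          apply HasDerivWithinAt.congr _ (fun y hy => hgr y hy) (hgr x hx)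
          convert h using 2
          all_goals rfl
      · rw [if_neg (lt_irrefl j)]
        apply ContinuousOn.mul _ continuousOn_const
        apply (hPcont j le_rfl).comp
          (Continuous.continuousOn (by fun_prop))
          (fun s hs => Set.Icc_subset_Icc (by linarith) le_rfl (hrmaps s hs))
  · -- (v) the integral bound
    have uDa : UniqueDiffOn ℝ (Set.Icc (0:ℝ) a) := uniqueDiffOn_Icc ha0
    have hmtL : Set.MapsTo (fun s => s + t) (Set.Icc (0:ℝ) a) s0 := by
      intro s hs
      obtain ⟨hs1, hs2⟩ := hs
      refine ⟨?_, ?_⟩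
      · show (0:ℝ) ≤ s + t
        linarith
      · show s + t ≤ Tstar
        linarith
    have idL : ∀ i, i ≤ j → ∀ x ∈ Set.Icc (0:ℝ) a,
        iteratedDerivWithin i ψ (Set.Icc 0 a) x = P i (x+t) := by
      apply chain_iteratedDerivWithin uDa (F := fun m x => P m (x+t))
      · intro x hx
        have := F4 (j-1) le_rfl x hx
        rw [hψ, this, Nat.sub_self]
      · intro m hm x hx
        have hmem : x + t ∈ s0 := hmtL hx
        have htr : HasDerivWithinAt (fun s => s + t) 1 (Set.Icc (0:ℝ) a) x :=
          ((hasDerivAt_id x).add_const t).hasDerivWithinAt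
        have h := (HD m hm (x+t) hmem).comp x htr hmtL
        simpa [Function.comp_def] using h
    have hPii : ∀ i, i ≤ j → IntervalIntegrable (fun x => (P i x)^2) MeasureTheory.volume 0 Tstar :=
      fun i hi => cont_ii' hT.le ((hPcont i hi).pow 2)
    -- left piece bound
    have hLeft : ∀ i, i ≤ j →
        (∫ x in (0:ℝ)..a, (iteratedDerivWithin i ψ (Set.Icc 0 a) x)^2) ≤ S := by
      intro i hi
      have h1 : (∫ x in (0:ℝ)..a, (iteratedDerivWithin i ψ (Set.Icc 0 a) x)^2)
          = ∫ x in (0:ℝ)..a, (P i (x+t))^2 := by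
        apply intervalIntegral.integral_congr
        intro x hx
        rw [Set.uIcc_of_le ha0.le] at hx
        exact congrArg (fun y => y^2) (idL i hi x hx)
      have h2 : (∫ x in (0:ℝ)..a, (P i (x+t))^2) = ∫ x in t..Tstar, (P i x)^2 := by
        have := intervalIntegral.integral_comp_add_right (a := (0:ℝ)) (b := a)
          (f := fun x => (P i x)^2) t
        rw [this, zero_add]
        congr 1
        rw [ha]; ring
      have h3 : (∫ x in t..Tstar, (P i x)^2) ≤ ∫ x in (0:ℝ)..Tstar, (P i x)^2 := by
        apply intervalIntegral.integral_mono_interval ht0 htT.le le_rfl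
        · filter_upwards with s using sq_nonneg _
        · exact hPii i hi
      rw [h1, h2]
      exact h3.trans (hSterm i hi)
    -- per term bound
    have key : ∀ i ∈ Finset.range (j+1),
        ((∫ x in (0:ℝ)..a, (iteratedDerivWithin i ψ (Set.Icc 0 a) x)^2)
          + ∫ x in a..Tstar, (iteratedDerivWithin i ψ (Set.Icc a Tstar) x)^2) ≤ CT * S := by
      intro i hi
      rw [Finset.mem_range] at hi
      have hi' : i ≤ j := Nat.lt_succ_iff.mp hi
      have hL := hLeft i hi'
      rcases eq_or_lt_of_le ht0 with ht0' | ht0'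
      · have haT0 : a = Tstar := by rw [ha, ← ht0', sub_zero]
        have hz : (∫ x in a..Tstar, (iteratedDerivWithin i ψ (Set.Icc a Tstar) x)^2) = 0 := by
          rw [haT0, intervalIntegral.integral_same]
        rw [hz, add_zero]
        calc (∫ x in (0:ℝ)..a, (iteratedDerivWithin i ψ (Set.Icc 0 a) x)^2) ≤ S := hL
          _ = 1 * S := (one_mul S).symm
          _ ≤ CT * S := mul_le_mul_of_nonneg_right hCT1 hS0
      · -- t > 0
        have haT' : a < Tstar := by rw [ha]; linarith
        have uDr : UniqueDiffOn ℝ (Set.Icc a Tstar) := uniqueDiffOn_Icc haT'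
        have hrmaps : ∀ s ∈ Set.Icc a Tstar, 2*Tstar - t - s ∈ Set.Icc a Tstar := by
          intro s hs
          rw [ha] at hs ⊢
          exact ⟨by linarith [hs.2], by linarith [hs.1, ht0]⟩
        have idR : ∀ m, m ≤ j → ∀ x ∈ Set.Icc a Tstar,
            iteratedDerivWithin m ψ (Set.Icc a Tstar) x =
              (fun m => if m < j then H (j-1-m) else fun x => P j (2*Tstar - t - x) * (-1)) m x := by
          apply chain_iteratedDerivWithin uDr
          · intro x _
            rw [if_pos (by omega : 0 < j), Nat.sub_zero]
          · intro m hm x hx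
            rcases lt_or_ge (m+1) j with hm1 | hm1
            · rw [if_pos hm, if_pos hm1]
              obtain ⟨k, hk⟩ : ∃ k, j - 1 - m = k + 1 := ⟨j - 1 - m - 1, by omega⟩
              have hk2 : j - 1 - (m+1) = k := by omega
              rw [hk, hk2]
              exact (hHd k x).hasDerivWithinAt
            · have hmj : m = j - 1 := by omega
              rw [if_pos hm, if_neg (by omega), hmj, Nat.sub_self]
              have hmem : 2*Tstar - t - x ∈ s0 :=
                Set.Icc_subset_Icc (by linarith) le_rfl (hrmaps x hx)
              have hmt : Set.MapsTo (fun s => 2*Tstar - t - s) (Set.Icc a Tstar) s0 := by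
                intro s hs
                exact Set.Icc_subset_Icc (by linarith) le_rfl (hrmaps s hs)
              have htr : HasDerivWithinAt (fun s => 2*Tstar - t - s) (-1) (Set.Icc a Tstar) x :=
                (((hasDerivAt_id x).const_sub (2*Tstar - t))).hasDerivWithinAt
              have h := (HD (j-1) (by omega) (2*Tstar - t - x) hmem).comp x htr hmt
              have hjj : j - 1 + 1 = j := by omega
              rw [hjj] at h
              apply HasDerivWithinAt.congr _ (fun y hy => hgr y hy) (hgr x hx)
              convert h using 2
              all_goals rfl
        rcases lt_or_ge i j with hij | hij
        · -- i < j : use sup bound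
          set k : ℕ := j - 1 - i with hk
          have h1 : (∫ x in a..Tstar, (iteratedDerivWithin i ψ (Set.Icc a Tstar) x)^2)
              = ∫ x in a..Tstar, (H k x)^2 := by
            apply intervalIntegral.integral_congr
            intro x hx
            rw [Set.uIcc_of_le haT'.le] at hx
            have e : iteratedDerivWithin i ψ (Set.Icc a Tstar) x = H (j-1-i) x := by
              have e0 := idR i hij.le x hx
              simpa [hij] using e0
            exact congrArg (fun y => y^2) e
          have hM0 : 0 ≤ (Tstar+1)^k * B := by positivity
          have h2 : (∫ x in a..Tstar, (H k x)^2) ≤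
              ∫ x in a..Tstar, ((Tstar+1)^k * B)^2 := by
            apply intervalIntegral.integral_mono_on haT'.le
            · exact ((hHcont k).pow 2).intervalIntegrable a Tstar
            · exact intervalIntegrable_const
            · intro x hx
              have hxs : x ∈ s0 := Set.Icc_subset_Icc (by linarith [ha0]) le_rfl hx
              have := hHb k x hxs
              have habs := abs_le.mp this
              nlinarith [habs.1, habs.2]
          have h3 : (∫ x in a..Tstar, ((Tstar+1)^k * B)^2) = (Tstar - a) * ((Tstar+1)^k * B)^2 := by
            rw [intervalIntegral.integral_const]
            simp [smul_eq_mul]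
          have hpow : ((Tstar+1)^k * B)^2 = (Tstar+1)^(2*k) * D := by
            rw [mul_pow, ← pow_mul, Real.sq_sqrt hD0, mul_comm 2 k]
          have hpow2 : (Tstar+1)^(2*k) ≤ (Tstar+1)^(2*j) := by
            apply pow_le_pow_right₀ (by linarith)
            omega
          have hTa : Tstar - a ≤ Tstar := by rw [ha]; linarith
          have hTa0 : 0 ≤ Tstar - a := by linarith
          have h4 : (Tstar - a) * ((Tstar+1)^k * B)^2 ≤ Tstar * ((Tstar+1)^(2*j) * D) := by
            rw [hpow]
            have hD1 : (Tstar+1)^(2*k) * D ≤ (Tstar+1)^(2*j) * D :=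
              mul_le_mul_of_nonneg_right hpow2 hD0
            have : (Tstar - a) * ((Tstar+1)^(2*k) * D) ≤ Tstar * ((Tstar+1)^(2*k) * D) :=
              mul_le_mul_of_nonneg_right hTa (by positivity)
            calc (Tstar - a) * ((Tstar+1)^(2*k) * D) ≤ Tstar * ((Tstar+1)^(2*k) * D) := this
              _ ≤ Tstar * ((Tstar+1)^(2*j) * D) := mul_le_mul_of_nonneg_left hD1 hT.le
          have hRight : (∫ x in a..Tstar, (iteratedDerivWithin i ψ (Set.Icc a Tstar) x)^2)
              ≤ Tstar * ((Tstar+1)^(2*j) * D) := by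
            rw [h1]
            exact h2.trans (h3.le.trans h4)
          have hCTeq : CT * S = 2 * S + Tstar * ((Tstar+1)^(2*j) * D) := by
            rw [hCT, hD]; ring
          rw [hCTeq]
          linarith [hS0]
        · -- i = j : reflection change of variables
          have hij' : i = j := le_antisymm hi' hij
          rw [hij'] at hL ⊢
          have h1 : (∫ x in a..Tstar, (iteratedDerivWithin j ψ (Set.Icc a Tstar) x)^2)
              = ∫ x in a..Tstar, (P j (2*Tstar - t - x))^2 := by
            apply intervalIntegral.integral_congr
            intro x hx
            rw [Set.uIcc_of_le haT'.le] at hx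
            have e : iteratedDerivWithin j ψ (Set.Icc a Tstar) x = P j (2*Tstar - t - x) * (-1) := by
              have e0 := idR j le_rfl x hx
              simpa using e0
            show iteratedDerivWithin j ψ (Set.Icc a Tstar) x ^ 2 = (P j (2*Tstar - t - x))^2
            rw [e]
            ring
          have h2 : (∫ x in a..Tstar, (P j (2*Tstar - t - x))^2)
              = ∫ x in a..Tstar, (P j x)^2 := by
            have := intervalIntegral.integral_comp_sub_left (a := a) (b := Tstar)
              (f := fun x => (P j x)^2) (2*Tstar - t)
            rw [this]
            congr 1 <;> rw [ha] <;> ring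
          have h3 : (∫ x in a..Tstar, (P j x)^2) ≤ ∫ x in (0:ℝ)..Tstar, (P j x)^2 := by
            apply intervalIntegral.integral_mono_interval ha0.le haT'.le le_rfl
            · filter_upwards with s using sq_nonneg _
            · exact hPii j le_rfl
          have hRight : (∫ x in a..Tstar, (iteratedDerivWithin j ψ (Set.Icc a Tstar) x)^2) ≤ S := by
            rw [h1, h2]
            exact h3.trans (hSterm j le_rfl)
          have : (2:ℝ) * S ≤ CT * S := by
            apply mul_le_mul_of_nonneg_right _ hS0
            rw [hCT]
            have : (0:ℝ) ≤ Tstar * (Tstar+1)^(2*j) * (1/Tstar + 2) := by positivity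
            linarith
          linarith
    calc ∑ i ∈ Finset.range (j + 1),
          ((∫ x in (0:ℝ)..a, (iteratedDerivWithin i ψ (Set.Icc 0 a) x)^2)
            + ∫ x in a..Tstar, (iteratedDerivWithin i ψ (Set.Icc a Tstar) x)^2)
        ≤ ∑ _i ∈ Finset.range (j + 1), CT * S := Finset.sum_le_sum key
      _ = (j+1 : ℕ) * (CT * S) := by rw [Finset.sum_const, Finset.card_range, nsmul_eq_mul]
      _ = ((j:ℝ)+1) * CT * S := by push_cast; ring
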